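/- Let ξ_1,…,ξ_W be i.i.d. real random variables with distribution function G whose density is bounded by m_G, let ψ > 0 and u ∈ ℝ, and set ζ_j(u) = 1{ξ_j ≤ u/ψ}. Then there exist finite constants C₀, C₁ (depending only on m_G) such that W^{-2} E| Σ_{j=1}^{W} (ζ_j(u) − ζ_j(0)) |⁴ ≤ C₀ W^{-1} + C₁ W² u⁴ ψ^{-4}. -/

import Mathlib

open MeasureTheory Filter ProbabilityTheory

/-- `γ` has a density (w.r.t. Lebesgue measure) bounded by `mG`. -/
def HasBoundedDensity (γ : Measure ℝ) (mG : ℝ) : Prop :=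
  ∃ d : ℝ → ℝ, (∀ x, 0 ≤ d x ∧ d x ≤ mG) ∧
    γ = (volume : Measure ℝ).withDensity fun x => ENNReal.ofReal (d x)


lemma myIntegrable {Ω : Type*} [MeasurableSpace Ω] {μ : Measure Ω} [IsFiniteMeasure μ]
    {f : Ω → ℝ} (hf : Measurable f) (C : ℝ) (h : ∀ ω, |f ω| ≤ C) : Integrable f μ :=
  ⟨hf.aestronglyMeasurable, HasFiniteIntegral.of_bounded (C := C)
    (Eventually.of_forall (by simpa [Real.norm_eq_abs] using h))⟩

lemma fourth_moment_sum_le {Ω : Type*} [MeasurableSpace Ω] {μ : Measure Ω}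
    [IsProbabilityMeasure μ] {X : ℕ → Ω → ℝ}
    (hm : ∀ j, Measurable (X j)) (hb : ∀ j ω, |X j ω| ≤ 2)
    (hind : iIndepFun X μ)
    (h0 : ∀ j, ∫ ω, X j ω ∂μ = 0)
    {v q : ℝ} (hv0 : 0 ≤ v) (hq0 : 0 ≤ q)
    (hv : ∀ j, ∫ ω, (X j ω) ^ 2 ∂μ ≤ v) (hq : ∀ j, ∫ ω, (X j ω) ^ 4 ∂μ ≤ q) :
    ∀ W : ℕ, (∫ ω, (∑ j ∈ Finset.range W, X j ω) ^ 2 ∂μ ≤ W * v) ∧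
      (∫ ω, (∑ j ∈ Finset.range W, X j ω) ^ 4 ∂μ ≤ W * q + 3 * W ^ 2 * v ^ 2) := by
  intro W
  induction W with
  | zero => simp
  | succ W ih =>
    set S : Ω → ℝ := fun ω => ∑ j ∈ Finset.range W, X j ω with hS
    have hSm : Measurable S := by
      apply Finset.measurable_sum
      exact fun j _ => hm j
    have hSb : ∀ ω, |S ω| ≤ 2 * W := by
      intro ω
      calc |S ω| ≤ ∑ j ∈ Finset.range W, |X j ω| := Finset.abs_sum_le_sum_abs _ _
        _ ≤ ∑ _j ∈ Finset.range W, (2 : ℝ) := Finset.sum_le_sum fun j _ => hb j ω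
        _ = 2 * W := by simp [mul_comm]
    have hSeq : S = ∑ j ∈ Finset.range W, X j := by
      ext ω; simp [hS]
    have hIndep : IndepFun S (X W) μ := by
      rw [hSeq]; exact hind.indepFun_sum_range_succ hm W
    have hpow : ∀ n : ℕ, Measurable fun x : ℝ => x ^ n := fun n => measurable_id.pow_const n
    -- integrability helpers
    have hintS : ∀ a : ℕ, Integrable (fun ω => S ω ^ a) μ := by
      intro a
      refine myIntegrable (hSm.pow_const a) ((2 * W) ^ a) fun ω => ?_
      rw [abs_pow]
      exact pow_le_pow_left₀ (abs_nonneg _) (hSb ω) a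
    have hintY : ∀ b : ℕ, Integrable (fun ω => X W ω ^ b) μ := by
      intro b
      refine myIntegrable ((hm W).pow_const b) (2 ^ b) fun ω => ?_
      rw [abs_pow]
      exact pow_le_pow_left₀ (abs_nonneg _) (hb W ω) b
    have hintSY : ∀ a b : ℕ, Integrable (fun ω => S ω ^ a * X W ω ^ b) μ := by
      intro a b
      refine myIntegrable ((hSm.pow_const a).mul ((hm W).pow_const b))
        ((2 * W) ^ a * 2 ^ b) fun ω => ?_
      rw [abs_mul, abs_pow, abs_pow]
      exact mul_le_mul (pow_le_pow_left₀ (abs_nonneg _) (hSb ω) a)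
        (pow_le_pow_left₀ (abs_nonneg _) (hb W ω) b) (by positivity) (by positivity)
    have hmul : ∀ a b : ℕ, ∫ ω, S ω ^ a * X W ω ^ b ∂μ
        = (∫ ω, S ω ^ a ∂μ) * ∫ ω, X W ω ^ b ∂μ := by
      intro a b
      have h1 : IndepFun (fun ω => S ω ^ a) (fun ω => X W ω ^ b) μ :=
        hIndep.comp (hpow a) (hpow b)
      have := h1.integral_mul_eq_mul_integral (hintS a).aestronglyMeasurable (hintY b).aestronglyMeasurable
      simpa [Pi.mul_apply] using this
    -- ∫ S = 0
    have hS0 : ∫ ω, S ω ∂μ = 0 := by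
      have : ∫ ω, S ω ∂μ = ∑ j ∈ Finset.range W, ∫ ω, X j ω ∂μ := by
        apply integral_finset_sum
        exact fun j _ => myIntegrable (hm j) 2 (hb j)
      rw [this]
      exact Finset.sum_eq_zero fun j _ => h0 j
    have hY0 : ∫ ω, X W ω ∂μ = 0 := h0 W
    have hS2nn : 0 ≤ ∫ ω, S ω ^ 2 ∂μ := integral_nonneg fun ω => by positivity
    have hY2nn : 0 ≤ ∫ ω, X W ω ^ 2 ∂μ := integral_nonneg fun ω => by positivity
    have hsum : ∀ ω, ∑ j ∈ Finset.range (W + 1), X j ω = S ω + X W ω := by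
      intro ω; rw [Finset.sum_range_succ]
    constructor
    · -- second moment
      have e1 : ∀ ω, (∑ j ∈ Finset.range (W + 1), X j ω) ^ 2
          = S ω ^ 2 + (2 * (S ω ^ 1 * X W ω ^ 1) + X W ω ^ 2) := fun ω => by
        rw [hsum ω]; ring
      have expand : ∫ ω, (∑ j ∈ Finset.range (W + 1), X j ω) ^ 2 ∂μ
          = (∫ ω, S ω ^ 2 ∂μ) + (2 * (∫ ω, S ω ^ 1 * X W ω ^ 1 ∂μ) + ∫ ω, X W ω ^ 2 ∂μ) := by
        simp only [e1]
        have g1 : Integrable (fun ω => 2 * (S ω ^ 1 * X W ω ^ 1) + X W ω ^ 2) μ :=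
          ((hintSY 1 1).const_mul 2).add (hintY 2)
        have g2 : Integrable (fun ω => 2 * (S ω ^ 1 * X W ω ^ 1)) μ := (hintSY 1 1).const_mul 2
        rw [integral_add (hintS 2) g1, integral_add g2 (hintY 2), integral_const_mul]
      rw [expand, hmul 1 1]
      simp only [pow_one, hS0, hY0, mul_zero, zero_mul, add_zero]
      have h1 := ih.1
      have h2 := hv W
      push_cast
      linarith
    · -- fourth moment
      have e1 : ∀ ω, (∑ j ∈ Finset.range (W + 1), X j ω) ^ 4
          = S ω ^ 4 + (4 * (S ω ^ 3 * X W ω ^ 1) + (6 * (S ω ^ 2 * X W ω ^ 2)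
            + (4 * (S ω ^ 1 * X W ω ^ 3) + X W ω ^ 4))) := fun ω => by
        rw [hsum ω]; ring
      have expand : ∫ ω, (∑ j ∈ Finset.range (W + 1), X j ω) ^ 4 ∂μ
          = (∫ ω, S ω ^ 4 ∂μ) + (4 * (∫ ω, S ω ^ 3 * X W ω ^ 1 ∂μ)
            + (6 * (∫ ω, S ω ^ 2 * X W ω ^ 2 ∂μ)
            + (4 * (∫ ω, S ω ^ 1 * X W ω ^ 3 ∂μ) + ∫ ω, X W ω ^ 4 ∂μ))) := by
        simp only [e1]
        have g1 : Integrable (fun ω => 4 * (S ω ^ 3 * X W ω ^ 1) + (6 * (S ω ^ 2 * X W ω ^ 2)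
            + (4 * (S ω ^ 1 * X W ω ^ 3) + X W ω ^ 4))) μ :=
          ((hintSY 3 1).const_mul 4).add (((hintSY 2 2).const_mul 6).add
            (((hintSY 1 3).const_mul 4).add (hintY 4)))
        have g2 : Integrable (fun ω => 6 * (S ω ^ 2 * X W ω ^ 2)
            + (4 * (S ω ^ 1 * X W ω ^ 3) + X W ω ^ 4)) μ :=
          ((hintSY 2 2).const_mul 6).add (((hintSY 1 3).const_mul 4).add (hintY 4))
        have g3 : Integrable (fun ω => 4 * (S ω ^ 1 * X W ω ^ 3) + X W ω ^ 4) μ :=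
          ((hintSY 1 3).const_mul 4).add (hintY 4)
        rw [integral_add (hintS 4) g1, integral_add ((hintSY 3 1).const_mul 4) g2,
          integral_add ((hintSY 2 2).const_mul 6) g3,
          integral_add ((hintSY 1 3).const_mul 4) (hintY 4),
          integral_const_mul, integral_const_mul, integral_const_mul]
      rw [expand, hmul 3 1, hmul 2 2, hmul 1 3]
      simp only [pow_one, hS0, hY0, mul_zero, zero_mul, add_zero]
      have h1 := ih.2
      have h2 := hq W
      have h3 : (∫ ω, S ω ^ 2 ∂μ) * ∫ ω, X W ω ^ 2 ∂μ ≤ (W * v) * v :=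
        mul_le_mul ih.1 (hv W) hY2nn (by positivity)
      push_cast
      nlinarith [sq_nonneg (v : ℝ)]

lemma cdf_diff_le {γ : Measure ℝ} [IsProbabilityMeasure γ] {mG : ℝ}
    (hdens : HasBoundedDensity γ mG) {a b : ℝ} (hab : a ≤ b) :
    (γ (Set.Iic b)).toReal - (γ (Set.Iic a)).toReal ≤ mG * (b - a) := by
  obtain ⟨d, hd, hγ⟩ := hdens
  have hmG : 0 ≤ mG := le_trans (hd 0).1 (hd 0).2
  have hsplit : γ (Set.Iic b) = γ (Set.Iic a) + γ (Set.Ioc a b) := by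
    rw [← Set.Iic_union_Ioc_eq_Iic hab,
      measure_union (Set.Iic_disjoint_Ioc le_rfl) measurableSet_Ioc]
  have hIoc : (γ (Set.Ioc a b)).toReal ≤ mG * (b - a) := by
    have h1 : γ (Set.Ioc a b) ≤ ENNReal.ofReal (mG * (b - a)) := by
      rw [hγ, withDensity_apply _ measurableSet_Ioc]
      calc ∫⁻ x in Set.Ioc a b, ENNReal.ofReal (d x) ∂volume
          ≤ ∫⁻ _ in Set.Ioc a b, ENNReal.ofReal mG ∂volume := by
            exact lintegral_mono fun x => ENNReal.ofReal_le_ofReal (hd x).2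
        _ = ENNReal.ofReal mG * volume (Set.Ioc a b) := setLIntegral_const _ _
        _ = ENNReal.ofReal (mG * (b - a)) := by
            rw [Real.volume_Ioc, ← ENNReal.ofReal_mul hmG]
    exact ENNReal.toReal_le_of_le_ofReal (by nlinarith) h1
  rw [hsplit, ENNReal.toReal_add (measure_ne_top _ _) (measure_ne_top _ _)]
  linarith

lemma toReal_prob_le_one {γ : Measure ℝ} [IsProbabilityMeasure γ] (s : Set ℝ) :
    (γ s).toReal ≤ 1 := by
  have := prob_le_one (μ := γ) (s := s)
  calc (γ s).toReal ≤ (1 : ENNReal).toReal := ENNReal.toReal_mono ENNReal.one_ne_top this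
    _ = 1 := by simp

lemma integral_indicator_eq {Ω : Type*} [MeasurableSpace Ω] {μ : Measure Ω}
    [IsProbabilityMeasure μ] {γ : Measure ℝ} {f : Ω → ℝ} (hf : Measurable f)
    (hmap : μ.map f = γ) (c : ℝ) :
    ∫ ω, (if f ω ≤ c then (1 : ℝ) else 0) ∂μ = (γ (Set.Iic c)).toReal := by
  have heq : (fun ω => if f ω ≤ c then (1 : ℝ) else 0)
      = Set.indicator (f ⁻¹' Set.Iic c) (fun _ => (1 : ℝ)) := by
    ext ω; by_cases h : f ω ≤ c <;> simp [Set.indicator, Set.mem_Iic, h]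
  rw [heq, integral_indicator_const _ (hf measurableSet_Iic), smul_eq_mul, mul_one,
    ← hmap, Measure.map_apply hf measurableSet_Iic]
  rfl

set_option maxHeartbeats 1600000 in
/-- let `ξ_1, …, ξ_W` be i.i.d. with CDF `G` whose density is bounded by `m_G`,
let `ψ > 0` and `u ∈ ℝ`, and set `ζ_j(u) = 1{ξ_j ≤ u/ψ}`.  Then there exist finite constants
`C₀, C₁` (depending only on `m_G`) such that
`W^{-2} E| Σ_{j=1}^W (ζ_j(u) − ζ_j(0)) |⁴ ≤ C₀ W^{-1} + C₁ W² u⁴ ψ^{-4}`. -/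
theorem indicator_increment_fourth_moment_bound
    {Ω : Type*} [MeasurableSpace Ω] (μ : Measure Ω) [IsProbabilityMeasure μ]
    (γ : Measure ℝ) [IsProbabilityMeasure γ] (mG : ℝ) (hdens : HasBoundedDensity γ mG)
    (ξ : ℕ → Ω → ℝ) (hmeas : ∀ j, Measurable (ξ j))
    (hdist : ∀ j, μ.map (ξ j) = γ)
    (hindep : iIndepFun ξ μ) :
    ∃ C₀ C₁ : ℝ, 0 ≤ C₀ ∧ 0 ≤ C₁ ∧
      ∀ (W : ℕ) (ψ u : ℝ), 0 < ψ →
        ((W : ℝ) ^ 2)⁻¹ *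
            ∫ ω, |∑ j ∈ Finset.range W,
                ((if ξ j ω ≤ u / ψ then (1 : ℝ) else 0) -
                  (if ξ j ω ≤ 0 then (1 : ℝ) else 0))| ^ 4 ∂μ ≤
          C₀ * (W : ℝ)⁻¹ + C₁ * (W : ℝ) ^ 2 * u ^ 4 / ψ ^ 4 := by
  have hmG : 0 ≤ mG := by
    obtain ⟨d, hd, -⟩ := hdens; exact le_trans (hd 0).1 (hd 0).2
  refine ⟨44, 20 * mG ^ 4, by norm_num, by positivity, ?_⟩
  intro W ψ u hψ
  rcases Nat.eq_zero_or_pos W with hW0 | hWpos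
  · subst hW0; simp
  have hWR : (1 : ℝ) ≤ (W : ℝ) := by exact_mod_cast hWpos
  have hWR0 : (0 : ℝ) < (W : ℝ) := by linarith
  set b : ℝ := u / ψ with hb
  set p : ℝ := (γ (Set.Iic b)).toReal - (γ (Set.Iic 0)).toReal with hp
  set η : ℕ → Ω → ℝ := fun j ω =>
    (if ξ j ω ≤ b then (1 : ℝ) else 0) - (if ξ j ω ≤ 0 then (1 : ℝ) else 0) with hη
  set X : ℕ → Ω → ℝ := fun j ω => η j ω - p with hXdef
  -- measurability and bounds
  have hmη : ∀ j, Measurable (η j) := by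
    intro j
    exact Measurable.sub
      (Measurable.ite (measurableSet_le (hmeas j) measurable_const)
        measurable_const measurable_const)
      (Measurable.ite (measurableSet_le (hmeas j) measurable_const)
        measurable_const measurable_const)
  have hmX : ∀ j, Measurable (X j) := fun j => (hmη j).sub measurable_const
  have hηb : ∀ j ω, |η j ω| ≤ 1 := by
    intro j ω
    simp only [hη]
    split_ifs <;> norm_num
  have hγ0 : ∀ s : Set ℝ, (0:ℝ) ≤ (γ s).toReal := fun s => ENNReal.toReal_nonneg
  have hpabs : |p| ≤ 1 := by
    rw [hp, abs_le]
    refine ⟨?_, ?_⟩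
    · have h1 := hγ0 (Set.Iic b); have h2 := toReal_prob_le_one (γ := γ) (Set.Iic 0); linarith
    · have h1 := toReal_prob_le_one (γ := γ) (Set.Iic b); have h2 := hγ0 (Set.Iic 0); linarith
  have hXb : ∀ j ω, |X j ω| ≤ 2 := by
    intro j ω
    have h1 := abs_le.1 (hηb j ω)
    have h2 := abs_le.1 hpabs
    rw [abs_le]
    constructor
    · simp only [hXdef]; linarith [h1.1, h2.2]
    · simp only [hXdef]; linarith [h1.2, h2.1]
  -- independence of the X's
  have hindX : iIndepFun X μ := by
    have hg : ∀ _j : ℕ, Measurable (fun x : ℝ =>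
        ((if x ≤ b then (1 : ℝ) else 0) - (if x ≤ 0 then (1 : ℝ) else 0)) - p) := by
      intro j
      refine Measurable.sub (Measurable.sub ?_ ?_) measurable_const
      · exact Measurable.ite measurableSet_Iic measurable_const measurable_const
      · exact Measurable.ite measurableSet_Iic measurable_const measurable_const
    exact hindep.comp _ hg
  -- integrals
  have hintif : ∀ j (c : ℝ), Integrable (fun ω => if ξ j ω ≤ c then (1:ℝ) else 0) μ := by
    intro j c
    refine myIntegrable (Measurable.ite (measurableSet_le (hmeas j) measurable_const)
      measurable_const measurable_const) 1 fun ω => ?_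
    split_ifs <;> norm_num
  have hintη : ∀ j, Integrable (η j) μ := fun j => myIntegrable (hmη j) 1 (hηb j)
  have hintη2 : ∀ j, Integrable (fun ω => η j ω ^ 2) μ := by
    intro j
    refine myIntegrable ((hmη j).pow_const 2) 1 fun ω => ?_
    rw [abs_pow]
    calc |η j ω| ^ 2 ≤ 1 ^ 2 := pow_le_pow_left₀ (abs_nonneg _) (hηb j ω) 2
      _ = 1 := one_pow 2
  have hintX2 : ∀ j, Integrable (fun ω => X j ω ^ 2) μ := by
    intro j
    refine myIntegrable ((hmX j).pow_const 2) 4 fun ω => ?_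
    rw [abs_pow]
    calc |X j ω| ^ 2 ≤ 2 ^ 2 := pow_le_pow_left₀ (abs_nonneg _) (hXb j ω) 2
      _ = 4 := by norm_num
  have hintX4 : ∀ j, Integrable (fun ω => X j ω ^ 4) μ := by
    intro j
    refine myIntegrable ((hmX j).pow_const 4) 16 fun ω => ?_
    rw [abs_pow]
    calc |X j ω| ^ 4 ≤ 2 ^ 4 := pow_le_pow_left₀ (abs_nonneg _) (hXb j ω) 4
      _ = 16 := by norm_num
  have hηint : ∀ j, ∫ ω, η j ω ∂μ = p := by
    intro j
    simp only [hη]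
    rw [integral_sub (hintif j b) (hintif j 0),
      integral_indicator_eq (hmeas j) (hdist j) b, integral_indicator_eq (hmeas j) (hdist j) 0]
  have hX0 : ∀ j, ∫ ω, X j ω ∂μ = 0 := by
    intro j
    simp only [hXdef]
    rw [integral_sub (hintη j) (integrable_const p), hηint j, integral_const]
    simp
  -- ∫ η² = |p| using the sign of b, and |p| ≤ mG |u| / ψ
  have hsign : (∀ j, ∫ ω, η j ω ^ 2 ∂μ = |p|) ∧ |p| ≤ mG * |u| / ψ := by
    rcases le_or_gt 0 b with hb0 | hb0
    · have hu0 : 0 ≤ u := by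
        have := (div_nonneg_iff.1 hb0)
        rcases this with ⟨h, _⟩ | ⟨_, h⟩
        · exact h
        · linarith
      have hpt : ∀ j ω, η j ω ^ 2 = η j ω := by
        intro j ω
        simp only [hη]
        split_ifs with h1 h2 h3
        · norm_num
        · norm_num
        · exact absurd (le_trans h3 hb0) h1
        · norm_num
      have hpnn : 0 ≤ p := by
        rw [hp, sub_nonneg]
        exact ENNReal.toReal_mono (measure_ne_top _ _)
          (measure_mono (Set.Iic_subset_Iic.2 hb0))
      have hdb := cdf_diff_le hdens hb0
      refine ⟨fun j => ?_, ?_⟩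
      · simp only [hpt]
        rw [hηint j, abs_of_nonneg hpnn]
      · rw [abs_of_nonneg hpnn, abs_of_nonneg hu0]
        calc p ≤ mG * (b - 0) := hdb
          _ = mG * u / ψ := by rw [hb]; ring
    · have hu0 : u ≤ 0 := by
        by_contra h
        push_neg at h
        have : 0 < b := by rw [hb]; positivity
        linarith
      have hpt : ∀ j ω, η j ω ^ 2 = -η j ω := by
        intro j ω
        simp only [hη]
        split_ifs with h1 h2 h3
        · norm_num
        · exact absurd (le_trans h1 hb0.le) h2
        · norm_num
        · norm_num
      have hpnp : p ≤ 0 := by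
        rw [hp, sub_nonpos]
        exact ENNReal.toReal_mono (measure_ne_top _ _)
          (measure_mono (Set.Iic_subset_Iic.2 hb0.le))
      have hdb := cdf_diff_le hdens hb0.le
      refine ⟨fun j => ?_, ?_⟩
      · simp only [hpt]
        rw [integral_neg, hηint j, abs_of_nonpos hpnp]
      · rw [abs_of_nonpos hpnp, abs_of_nonpos hu0]
        calc -p ≤ mG * (0 - b) := by rw [hp]; linarith [hdb]
          _ = mG * -u / ψ := by rw [hb]; ring
  obtain ⟨hη2, hple⟩ := hsign
  -- second and fourth moments of X
  have hX2eq : ∀ j, ∫ ω, X j ω ^ 2 ∂μ = |p| - p ^ 2 := by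
    intro j
    have e : ∀ ω, X j ω ^ 2 = η j ω ^ 2 + ((-(2 * p)) * η j ω + p ^ 2) := by
      intro ω; simp only [hXdef]; ring
    simp only [e]
    have g1 : Integrable (fun ω => (-(2 * p)) * η j ω + p ^ 2) μ :=
      ((hintη j).const_mul _).add (integrable_const _)
    rw [integral_add (hintη2 j) g1,
      integral_add ((hintη j).const_mul _) (integrable_const _),
      integral_const_mul, hηint j, hη2 j, integral_const]
    simp only [measure_univ, probReal_univ, ENNReal.toReal_one, smul_eq_mul, one_mul]
    ring
  have hvX : ∀ j, ∫ ω, X j ω ^ 2 ∂μ ≤ |p| := by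
    intro j
    rw [hX2eq j]
    nlinarith [sq_nonneg p]
  have hqX : ∀ j, ∫ ω, X j ω ^ 4 ∂μ ≤ 4 * |p| := by
    intro j
    have hpt : ∀ ω, X j ω ^ 4 ≤ 4 * X j ω ^ 2 := by
      intro ω
      have h := abs_le.1 (hXb j ω)
      have h4 : 0 ≤ 4 - X j ω ^ 2 := by nlinarith [h.1, h.2]
      nlinarith [mul_nonneg (sq_nonneg (X j ω)) h4]
    calc ∫ ω, X j ω ^ 4 ∂μ ≤ ∫ ω, 4 * X j ω ^ 2 ∂μ :=
          integral_mono (hintX4 j) ((hintX2 j).const_mul 4) hpt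
      _ = 4 * ∫ ω, X j ω ^ 2 ∂μ := integral_const_mul _ _
      _ ≤ 4 * |p| := by linarith [hvX j]
  -- the core fourth moment bound
  have hcore := (fourth_moment_sum_le hmX hXb hindX hX0 (abs_nonneg p)
    (by positivity : (0:ℝ) ≤ 4 * |p|) hvX hqX W).2
  -- rewrite the target integrand
  have hsum_eq : ∀ ω, ∑ j ∈ Finset.range W, η j ω
      = (∑ j ∈ Finset.range W, X j ω) + W * p := by
    intro ω
    have h : ∀ j ∈ Finset.range W, η j ω = X j ω + p := by
      intro j _; simp only [hXdef]; ring
    rw [Finset.sum_congr rfl h, Finset.sum_add_distrib, Finset.sum_const,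
      Finset.card_range, nsmul_eq_mul]
  have habs4 : ∀ x : ℝ, |x| ^ 4 = x ^ 4 := by
    intro x
    rw [← abs_pow]
    exact abs_of_nonneg (by positivity)
  have hIeq : ∫ ω, |∑ j ∈ Finset.range W,
        ((if ξ j ω ≤ b then (1 : ℝ) else 0) - (if ξ j ω ≤ 0 then (1 : ℝ) else 0))| ^ 4 ∂μ
      = ∫ ω, ((∑ j ∈ Finset.range W, X j ω) + (W : ℝ) * p) ^ 4 ∂μ := by
    refine integral_congr_ae (Eventually.of_forall fun ω => ?_)
    show |∑ j ∈ Finset.range W, η j ω| ^ 4 = _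
    rw [habs4, hsum_eq ω]
  have hmSX : Measurable fun ω => ∑ j ∈ Finset.range W, X j ω :=
    Finset.measurable_sum _ fun j _ => hmX j
  have hSXb : ∀ ω, |∑ j ∈ Finset.range W, X j ω| ≤ 2 * W := by
    intro ω
    calc |∑ j ∈ Finset.range W, X j ω| ≤ ∑ j ∈ Finset.range W, |X j ω| :=
        Finset.abs_sum_le_sum_abs _ _
      _ ≤ ∑ _j ∈ Finset.range W, (2:ℝ) := Finset.sum_le_sum fun j _ => hXb j ω
      _ = 2 * W := by simp [mul_comm]
  have hintSX4 : Integrable (fun ω => (∑ j ∈ Finset.range W, X j ω) ^ 4) μ := by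
    refine myIntegrable (hmSX.pow_const 4) ((2*W)^4) fun ω => ?_
    rw [abs_pow]; exact pow_le_pow_left₀ (abs_nonneg _) (hSXb ω) 4
  have hintTot : Integrable
      (fun ω => ((∑ j ∈ Finset.range W, X j ω) + (W:ℝ)*p) ^ 4) μ := by
    refine myIntegrable ((hmSX.add_const _).pow_const 4) ((3*W)^4) fun ω => ?_
    rw [abs_pow]
    refine pow_le_pow_left₀ (abs_nonneg _) ?_ 4
    calc |(∑ j ∈ Finset.range W, X j ω) + (W:ℝ)*p|
        ≤ |∑ j ∈ Finset.range W, X j ω| + |(W:ℝ)*p| := abs_add_le _ _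
      _ ≤ 2*W + W := by
          have h1 : |(W:ℝ)*p| = W * |p| := by rw [abs_mul, abs_of_nonneg hWR0.le]
          have h2 := hSXb ω
          rw [h1]
          nlinarith [abs_nonneg p, hpabs]
      _ = 3*W := by ring
  have hbig : ∫ ω, ((∑ j ∈ Finset.range W, X j ω) + (W:ℝ)*p) ^ 4 ∂μ
      ≤ 8 * ∫ ω, (∑ j ∈ Finset.range W, X j ω) ^ 4 ∂μ + 8 * ((W:ℝ)*p)^4 := by
    have hpt : ∀ ω, ((∑ j ∈ Finset.range W, X j ω) + (W:ℝ)*p) ^ 4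
        ≤ 8 * (∑ j ∈ Finset.range W, X j ω) ^ 4 + 8 * ((W:ℝ)*p)^4 := by
      intro ω
      set s := ∑ j ∈ Finset.range W, X j ω with hs
      set c := (W:ℝ)*p with hc
      nlinarith [sq_nonneg (s - c), sq_nonneg (s + c), sq_nonneg (s^2 - c^2),
        sq_nonneg (s^2 + c^2), sq_nonneg (s*c), sq_nonneg s, sq_nonneg c]
    calc ∫ ω, ((∑ j ∈ Finset.range W, X j ω) + (W:ℝ)*p) ^ 4 ∂μ
        ≤ ∫ ω, (8 * (∑ j ∈ Finset.range W, X j ω) ^ 4 + 8 * ((W:ℝ)*p)^4) ∂μ :=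
          integral_mono hintTot ((hintSX4.const_mul 8).add (integrable_const _)) hpt
      _ = 8 * ∫ ω, (∑ j ∈ Finset.range W, X j ω) ^ 4 ∂μ + 8 * ((W:ℝ)*p)^4 := by
          rw [integral_add (hintSX4.const_mul 8) (integrable_const _), integral_const_mul,
            integral_const]
          simp
  -- final arithmetic
  rw [hIeq, inv_mul_le_iff₀ (by positivity : (0:ℝ) < (W:ℝ)^2)]
  have ht4 : |p| ^ 4 ≤ mG ^ 4 * u ^ 4 / ψ ^ 4 := by
    calc |p| ^ 4 ≤ (mG * |u| / ψ) ^ 4 := pow_le_pow_left₀ (abs_nonneg _) hple 4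
      _ = mG ^ 4 * |u| ^ 4 / ψ ^ 4 := by rw [div_pow, mul_pow]
      _ = mG ^ 4 * u ^ 4 / ψ ^ 4 := by rw [habs4 u]
  have hp4 : p ^ 4 = |p| ^ 4 := (habs4 p).symm
  have hRHS : (W:ℝ)^2 * (44 * (W:ℝ)⁻¹ + 20 * mG^4 * (W:ℝ)^2 * u^4 / ψ^4)
      = 44 * W + 20 * mG^4 * (W:ℝ)^4 * u^4 / ψ^4 := by
    field_simp
  rw [hRHS]
  have hWp4 : ((W:ℝ)*p)^4 = (W:ℝ)^4 * |p|^4 := by rw [mul_pow, hp4]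
  set t := |p| with hT
  have ht0 : 0 ≤ t := abs_nonneg p
  have ht1 : t ≤ 1 := hpabs
  have key1 : 2*(W:ℝ)^2*t^2 ≤ (W:ℝ) + (W:ℝ)^3 * t^4 := by
    nlinarith [mul_nonneg hWR0.le (sq_nonneg (1 - (W:ℝ)*t^2))]
  have key2 : (W:ℝ)^3 * t^4 ≤ (W:ℝ)^4 * t^4 := by
    nlinarith [mul_nonneg (mul_nonneg (pow_nonneg hWR0.le 3) (sub_nonneg.2 hWR))
      (pow_nonneg ht0 4)]
  have hC : 20 * (W:ℝ)^4 * t^4 ≤ 20 * mG^4 * (W:ℝ)^4 * u^4/ψ^4 := by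
    calc 20 * (W:ℝ)^4 * t^4 ≤ 20 * (W:ℝ)^4 * (mG^4 * u^4/ψ^4) :=
        mul_le_mul_of_nonneg_left ht4 (by positivity)
      _ = 20 * mG^4 * (W:ℝ)^4 * u^4/ψ^4 := by ring
  have hA : 32 * (W:ℝ) * t ≤ 32 * (W:ℝ) := by nlinarith
  calc ∫ ω, ((∑ j ∈ Finset.range W, X j ω) + (W:ℝ)*p) ^ 4 ∂μ
      ≤ 8 * ∫ ω, (∑ j ∈ Finset.range W, X j ω) ^ 4 ∂μ + 8 * ((W:ℝ)*p)^4 := hbig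
    _ ≤ 8 * ((W:ℝ) * (4 * t) + 3 * (W:ℝ)^2 * t^2) + 8 * ((W:ℝ)^4 * t^4) := by
        rw [hWp4]
        have := hcore
        linarith
    _ ≤ 44 * (W:ℝ) + 20 * mG^4 * (W:ℝ)^4 * u^4/ψ^4 := by linarith
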